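/- Consider the Euler–Maruyama scheme for the Ornstein–Uhlenbeck equation, X_{n+1} = (1 − γh)X_n + σ√h ξ_n with deterministic X_0 = x and 0 < γh < 2, together with the deterministic postprocessor X̄_n := √(1 − γh/2) · X_n. Then lim_{n→∞} E(X̄_n²) = σ²/(2γ), i.e. the corresponding R-function of Euler–Maruyama is R(z) = 2/(2+z) and the postprocessor C(z) = √(1 + z/2) (z = −γh) yields exact sampling of the stationary second moment. -/

import Mathlib

open MeasureTheory ProbabilityTheory Filter Topology Real Set
open scoped ENNReal NNReal

section guass_aux

lemma sq_exp_Ioi : ∫ x in Ioi (0:ℝ), x ^ 2 * Real.exp (-(1/2) * x ^ 2)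
    = Real.sqrt (2 * π) / 2 := by
  have h := integral_rpow_mul_exp_neg_mul_rpow (p := 2) (q := 2) (b := 1/2)
    (by norm_num) (by norm_num) (by norm_num)
  have hconv : ∀ x : ℝ, x ^ (2:ℝ) * Real.exp (-(1/2) * x ^ (2:ℝ))
      = x ^ 2 * Real.exp (-(1/2) * x ^ 2) := by
    intro x
    rw [show (2:ℝ) = ((2:ℕ):ℝ) by norm_num, Real.rpow_natCast]
  simp_rw [hconv] at h
  rw [h]
  have h32 : ((2:ℝ) + 1) / 2 = 1/2 + 1 := by norm_num
  rw [h32, Real.Gamma_add_one (by norm_num), Real.Gamma_one_half_eq]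
  rw [show (-((2:ℝ)+1)/2) = (-(3/2) : ℝ) by norm_num]
  rw [show ((1:ℝ)/2) = 2⁻¹ by norm_num, Real.inv_rpow (by norm_num), ← Real.rpow_neg (by norm_num),
    neg_neg]
  rw [Real.sqrt_mul (by norm_num), show (3/2 : ℝ) = 1 + 1/2 by norm_num,
    Real.rpow_add (by norm_num), Real.rpow_one, ← Real.sqrt_eq_rpow]
  ring

lemma sq_exp_integrable : Integrable (fun x : ℝ => x ^ 2 * Real.exp (-(1/2) * x ^ 2)) := by
  have h := integrable_rpow_mul_exp_neg_mul_sq (b := 1/2) (by norm_num) (s := 2) (by norm_num)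
  refine h.congr (Filter.Eventually.of_forall fun x => ?_)
  simp [Real.rpow_natCast]

lemma sq_exp_total : ∫ x : ℝ, x ^ 2 * Real.exp (-(1/2) * x ^ 2) = Real.sqrt (2 * π) := by
  have h := integral_comp_abs (f := fun x : ℝ => x ^ 2 * Real.exp (-(1/2) * x ^ 2))
  simp only [sq_abs] at h
  rw [h, sq_exp_Ioi]
  ring

lemma gauss_density (g : ℝ → ℝ) :
    ∫ x, g x ∂(gaussianReal 0 1)
      = ∫ x, gaussianPDFReal 0 1 x * g x := by
  rw [gaussianReal_of_var_ne_zero _ one_ne_zero]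
  have : gaussianPDF 0 1 = fun x => ((gaussianPDFReal 0 1 x).toNNReal : ℝ≥0∞) := by
    funext x; rfl
  rw [this, integral_withDensity_eq_integral_smul
    ((measurable_gaussianPDFReal 0 1).real_toNNReal) g]
  congr 1; funext x
  rw [NNReal.smul_def, smul_eq_mul, Real.coe_toNNReal _ (gaussianPDFReal_nonneg 0 1 x)]

lemma gauss_pdf_eq : ∀ x : ℝ, gaussianPDFReal 0 1 x
    = (Real.sqrt (2 * π))⁻¹ * Real.exp (-(1/2) * x ^ 2) := by
  intro x
  rw [gaussianPDFReal]
  push_cast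
  norm_num
  left
  ring_nf

lemma gauss_int2 : ∫ x, x ^ 2 ∂(gaussianReal 0 1) = 1 := by
  rw [gauss_density (fun x => x ^ 2)]
  simp_rw [gauss_pdf_eq]
  simp_rw [mul_assoc, mul_comm (Real.exp _)]
  rw [integral_const_mul, ← mul_comm, sq_exp_total]
  rw [mul_inv_cancel₀]
  positivity

lemma gauss_integrable_sq : Integrable (fun x : ℝ => x ^ 2) (gaussianReal 0 1) := by
  rw [gaussianReal_of_var_ne_zero _ one_ne_zero]
  have hd : gaussianPDF 0 1 = fun x => (((gaussianPDFReal 0 1 x).toNNReal : ℝ≥0) : ℝ≥0∞) := by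
    funext x; rfl
  rw [hd, integrable_withDensity_iff_integrable_smul
    ((measurable_gaussianPDFReal 0 1).real_toNNReal)]
  have : (fun x : ℝ => (gaussianPDFReal 0 1 x).toNNReal • x ^ 2)
      = fun x : ℝ => (Real.sqrt (2 * π))⁻¹ * (x ^ 2 * Real.exp (-(1/2) * x ^ 2)) := by
    funext x
    rw [NNReal.smul_def, smul_eq_mul, Real.coe_toNNReal _ (gaussianPDFReal_nonneg 0 1 x),
      gauss_pdf_eq]
    ring
  rw [this]
  exact sq_exp_integrable.const_mul _

lemma gauss_memLp2 : MemLp id 2 (gaussianReal 0 1) := by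
  rw [memLp_two_iff_integrable_sq measurable_id.aestronglyMeasurable]
  simpa using gauss_integrable_sq

lemma gauss_int1 : ∫ x, x ∂(gaussianReal 0 1) = 0 := by
  have hmap : (gaussianReal 0 1).map (fun x => (-1 : ℝ) * x) = gaussianReal 0 1 := by
    have := gaussianReal_map_const_mul (μ := 0) (v := 1) (-1 : ℝ)
    simp only [mul_zero] at this
    rw [this]
    norm_num
  have h1 : ∫ x, x ∂(gaussianReal 0 1)
      = ∫ x, x ∂((gaussianReal 0 1).map (fun x => (-1 : ℝ) * x)) := by rw [hmap]
  rw [show (∫ x, x ∂(gaussianReal 0 1).map (fun x => (-1:ℝ) * x))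
      = ∫ x, (-1:ℝ) * x ∂(gaussianReal 0 1) from
    integral_map (by fun_prop) aestronglyMeasurable_id] at h1
  simp only [neg_one_mul] at h1
  rw [integral_neg (f := fun x : ℝ => x)] at h1
  linarith

end guass_aux

/-- For the Euler–Maruyama scheme `X_{n+1} = (1 - γh) X_n + σ√h ξ_n`
applied to the Ornstein–Uhlenbeck equation (deterministic `X_0 = x`, i.i.d. standard
Gaussian `ξ_n`, `0 < γh < 2`), the deterministic postprocessor `X̄_n = √(1 - γh/2)·X_n`
yields `lim_{n→∞} E(X̄_n²) = σ²/(2γ)`: the `R`-function of Euler–Maruyama is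
`R(z) = 2/(2+z)` and the postprocessor `C(z) = √(1 + z/2)` (with `z = -γh`) samples the
stationary second moment exactly. -/
theorem postprocessed_euler_maruyama_OU_exact_second_moment
    {Ω : Type*} [MeasurableSpace Ω] (μ : Measure Ω) [IsProbabilityMeasure μ]
    (γ σ h : ℝ) (hγ : 0 < γ) (hσ : 0 < σ) (hh : 0 < h) (hstab : γ * h < 2)
    (ξ : ℕ → Ω → ℝ) (hmeas : ∀ n, Measurable (ξ n))
    (hindep : iIndepFun ξ μ)
    (hgauss : ∀ n, μ.map (ξ n) = gaussianReal 0 1)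
    (x : ℝ) (X : ℕ → Ω → ℝ) (hX0 : X 0 = fun _ => x)
    (hrec : ∀ n ω, X (n + 1) ω = (1 - γ * h) * X n ω + σ * Real.sqrt h * ξ n ω)
    (Xbar : ℕ → Ω → ℝ)
    (hXbar : ∀ n ω, Xbar n ω = Real.sqrt (1 - γ * h / 2) * X n ω) :
    Tendsto (fun n => ∫ ω, (Xbar n ω) ^ 2 ∂μ) atTop (𝓝 (σ ^ 2 / (2 * γ)))
      ∧ 2 * (-γ * h) * 1 ^ 2 / ((1 + -γ * h) ^ 2 - 1) = 2 / (2 + -γ * h) := by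
  have hγh0 : 0 < γ * h := mul_pos hγ hh
  set a : ℝ := 1 - γ * h with ha_def
  set c : ℝ := σ * Real.sqrt h with hc_def
  -- basic facts
  have ha1 : a ^ 2 < 1 := by
    have h1 : -1 < a := by simp only [ha_def]; linarith
    have h2 : a < 1 := by simp only [ha_def]; linarith
    nlinarith
  have ha1' : (1 : ℝ) - a ^ 2 ≠ 0 := by nlinarith
  have hc2 : c ^ 2 = σ ^ 2 * h := by
    rw [hc_def, mul_pow, Real.sq_sqrt hh.le]
  -- moments of the ξ
  have hξint1 : ∀ n, ∫ ω, ξ n ω ∂μ = 0 := by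
    intro n
    have := integral_map (μ := μ) (hmeas n).aemeasurable
      (f := fun y : ℝ => y) aestronglyMeasurable_id
    rw [hgauss n] at this
    rw [← this, gauss_int1]
  have hξint2 : ∀ n, ∫ ω, (ξ n ω) ^ 2 ∂μ = 1 := by
    intro n
    have := integral_map (μ := μ) (hmeas n).aemeasurable
      (f := fun y : ℝ => y ^ 2) ((measurable_id.pow_const 2).aestronglyMeasurable)
    rw [hgauss n] at this
    rw [← this, gauss_int2]
  have hξmem : ∀ n, MemLp (ξ n) 2 μ := by
    intro n
    have h0 : MemLp id 2 (μ.map (ξ n)) := by rw [hgauss n]; exact gauss_memLp2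
    exact (memLp_map_measure_iff aestronglyMeasurable_id (hmeas n).aemeasurable).mp h0
  -- measurability of X n
  have hXfun : ∀ n, X (n + 1) = fun ω => a * X n ω + c * ξ n ω := by
    intro n; funext ω; rw [hrec n ω]
  have hXmeas : ∀ n, Measurable (X n) := by
    intro n
    induction n with
    | zero => rw [hX0]; exact measurable_const
    | succ n ih =>
      rw [hXfun n]
      exact (ih.const_mul a).add ((hmeas n).const_mul c)
  -- X n is a function of ξ_0, ..., ξ_{n-1}
  have hrep : ∀ n, ∃ f : ({ i // i ∈ Finset.range n } → ℝ) → ℝ,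
      Measurable f ∧ ∀ ω, X n ω = f (fun i => ξ (i : ℕ) ω) := by
    intro n
    induction n with
    | zero => exact ⟨fun _ => x, measurable_const, fun ω => by rw [hX0]⟩
    | succ n ih =>
      obtain ⟨f, hf, hfe⟩ := ih
      refine ⟨fun v => a * f (fun i =>
          v ⟨(i : ℕ), Finset.mem_range.mpr (Nat.lt_succ_of_lt (Finset.mem_range.mp i.2))⟩)
          + c * v ⟨n, Finset.mem_range.mpr (Nat.lt_succ_self n)⟩, ?_, ?_⟩
      · exact ((hf.comp (measurable_pi_lambda _ fun i => measurable_pi_apply _)).const_mul a).add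
          (by fun_prop)
      · intro ω
        rw [hrec n ω, hfe ω]
  -- independence of X n and ξ n
  have hindXξ : ∀ n, IndepFun (X n) (ξ n) μ := by
    intro n
    obtain ⟨f, hf, hfe⟩ := hrep n
    have hd : Disjoint (Finset.range n) ({n} : Finset ℕ) := by
      simp only [Finset.disjoint_left, Finset.mem_range, Finset.mem_singleton]
      omega
    have H := (hindep.indepFun_finset (Finset.range n) {n} hd hmeas).comp hf
      (measurable_pi_apply (⟨n, Finset.mem_singleton_self n⟩ : ({n} : Finset ℕ)))
    have e1 : (f ∘ fun ω (i : { i // i ∈ Finset.range n }) => ξ (i : ℕ) ω) = X n := by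
      funext ω; exact (hfe ω).symm
    have e2 : ((fun v : ({n} : Finset ℕ) → ℝ =>
        v ⟨n, Finset.mem_singleton_self n⟩) ∘ fun ω (i : ({n} : Finset ℕ)) => ξ (i : ℕ) ω)
        = ξ n := by funext ω; rfl
    rwa [e1, e2] at H
  -- second moments of X n
  have hXmem : ∀ n, MemLp (X n) 2 μ := by
    intro n
    induction n with
    | zero => rw [hX0]; exact memLp_const x
    | succ n ih =>
      rw [hXfun n]
      exact (ih.const_mul a).add ((hξmem n).const_mul c)
  -- the moment recursion
  have key : ∀ n, ∫ ω, X (n + 1) ω ^ 2 ∂μ = a ^ 2 * ∫ ω, X n ω ^ 2 ∂μ + c ^ 2 := by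
    intro n
    have hexp : ∀ ω, X (n + 1) ω ^ 2
        = a ^ 2 * X n ω ^ 2 + (2 * a * c) * (X n ω * ξ n ω) + c ^ 2 * ξ n ω ^ 2 := by
      intro ω; rw [hrec n ω]; ring
    have intA : Integrable (fun ω => a ^ 2 * X n ω ^ 2) μ :=
      ((hXmem n).integrable_sq).const_mul _
    have intM : Integrable (fun ω => X n ω * ξ n ω) μ :=
      (hindXξ n).integrable_mul ((hXmem n).integrable one_le_two)
        ((hξmem n).integrable one_le_two)
    have intB : Integrable (fun ω => (2 * a * c) * (X n ω * ξ n ω)) μ := intM.const_mul _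
    have intC : Integrable (fun ω => c ^ 2 * ξ n ω ^ 2) μ :=
      ((hξmem n).integrable_sq).const_mul _
    have hXξ0 : ∫ ω, X n ω * ξ n ω ∂μ = 0 := by
      have h1 := (hindXξ n).integral_mul_eq_mul_integral ((hXmeas n).aestronglyMeasurable)
        ((hmeas n).aestronglyMeasurable)
      have h2 : (fun ω => X n ω * ξ n ω) = X n * ξ n := rfl
      rw [h2]
      rw [h1, hξint1 n, mul_zero]
    calc ∫ ω, X (n + 1) ω ^ 2 ∂μ
        = ∫ ω, (a ^ 2 * X n ω ^ 2 + (2 * a * c) * (X n ω * ξ n ω) + c ^ 2 * ξ n ω ^ 2) ∂μ := by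
          exact integral_congr_ae (Filter.Eventually.of_forall fun ω => hexp ω)
      _ = (∫ ω, a ^ 2 * X n ω ^ 2 ∂μ) + (∫ ω, (2 * a * c) * (X n ω * ξ n ω) ∂μ)
            + ∫ ω, c ^ 2 * ξ n ω ^ 2 ∂μ := by
          have intAB : Integrable
              (fun ω => a ^ 2 * X n ω ^ 2 + (2 * a * c) * (X n ω * ξ n ω)) μ := intA.add intB
          rw [integral_add intAB intC, integral_add intA intB]
      _ = a ^ 2 * ∫ ω, X n ω ^ 2 ∂μ + c ^ 2 := by
          rw [integral_const_mul, integral_const_mul, integral_const_mul, hXξ0, hξint2 n]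
          ring
  -- closed form
  set L : ℝ := c ^ 2 / (1 - a ^ 2) with hL_def
  have hLrec : a ^ 2 * L + c ^ 2 = L := by
    rw [hL_def]; field_simp; ring
  have Mform : ∀ n, ∫ ω, X n ω ^ 2 ∂μ = (a ^ 2) ^ n * (x ^ 2 - L) + L := by
    intro n
    induction n with
    | zero =>
      rw [hX0]
      simp [integral_const]
    | succ n ih =>
      have he : a ^ 2 * ((a ^ 2) ^ n * (x ^ 2 - L) + L) + c ^ 2
          = (a ^ 2) ^ (n + 1) * (x ^ 2 - L) + (a ^ 2 * L + c ^ 2) := by ring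
      rw [key n, ih, he, hLrec]
  -- expressing the postprocessed moment
  have hhalf : (0 : ℝ) ≤ 1 - γ * h / 2 := by linarith
  have hXbar2 : ∀ n, ∫ ω, Xbar n ω ^ 2 ∂μ
      = (1 - γ * h / 2) * ((a ^ 2) ^ n * (x ^ 2 - L) + L) := by
    intro n
    have : ∀ ω, Xbar n ω ^ 2 = (1 - γ * h / 2) * X n ω ^ 2 := by
      intro ω
      rw [hXbar n ω, mul_pow, Real.sq_sqrt hhalf]
    rw [integral_congr_ae (Filter.Eventually.of_forall this), integral_const_mul, Mform n]
  -- final limit value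
  have hlim : (1 - γ * h / 2) * L = σ ^ 2 / (2 * γ) := by
    rw [hL_def, hc2, ha_def]
    have h1 : 1 - (1 - γ * h) ^ 2 = γ * h * (2 - γ * h) := by ring
    rw [h1]
    have h2 : γ * h * (2 - γ * h) ≠ 0 := ne_of_gt (mul_pos hγh0 (by linarith))
    have h3 : (2:ℝ) - γ * h ≠ 0 := by linarith
    field_simp
  constructor
  · have ht : Tendsto (fun n : ℕ => (1 - γ * h / 2) * ((a ^ 2) ^ n * (x ^ 2 - L) + L))
        atTop (𝓝 ((1 - γ * h / 2) * ((0 : ℝ) * (x ^ 2 - L) + L))) := by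
      exact ((((tendsto_pow_atTop_nhds_zero_of_lt_one (sq_nonneg a) ha1).mul_const
        (x ^ 2 - L)).add_const L).const_mul _)
    rw [zero_mul, zero_add, hlim] at ht
    exact Tendsto.congr (fun n => (hXbar2 n).symm) ht
  · have hz : γ * h ≠ 0 := ne_of_gt hγh0
    have h2 : (2 : ℝ) + -γ * h ≠ 0 := by
      have : -γ * h = -(γ * h) := by ring
      rw [this]; linarith
    have hden : (1 + -γ * h) ^ 2 - 1 = (-γ * h) * (2 + -γ * h) := by ring
    rw [hden, one_pow, mul_one]
    rw [div_eq_div_iff (ne_of_lt (mul_neg_of_neg_of_pos (by linarith) (by linarith))) h2]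
    ring
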